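/- Let u1, u2 be positive reals with max{u1, u2} ≥ λ/(4κ), κ ≥ 0 and 0 < λ ≤ 2κ. Let U ∈ ℝ^{1×N1} have first two entries u1, u2 and zeros elsewhere, and b = 2κ. Then the set of minimizers of λ‖x‖₁ + (u1 x1 + u2 x2 − 2κ)² equals: {((4u1κ−λ)/(2u1²)) e1} if u1 > u2; {((4u2κ−λ)/(2u2²)) e2} if u1 < u2; and {((4u1κ−λ)/(2u1²))(t e1 + (1−t) e2) : t ∈ [0,1]} if u1 = u2. -/

import Mathlib

lemma aux_pair_sum (N1 : ℕ) (hN : 1 < N1) (g : Fin N1 → ℝ)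
    (hg : ∀ i : Fin N1, (i : ℕ) ≠ 0 → (i : ℕ) ≠ 1 → g i = 0) :
    ∑ i, g i = g ⟨0, by omega⟩ + g ⟨1, by omega⟩ := by
  have h01 : (⟨0, by omega⟩ : Fin N1) ≠ ⟨1, by omega⟩ := by simp [Fin.ext_iff]
  rw [← Finset.sum_pair h01]
  symm
  apply Finset.sum_subset (Finset.subset_univ _)
  intro i _ hi
  simp only [Finset.mem_insert, Finset.mem_singleton, Fin.ext_iff] at hi
  push_neg at hi
  exact hg i hi.1 hi.2

lemma aux_pair_le (N1 : ℕ) (hN : 1 < N1) (g : Fin N1 → ℝ) (hg : ∀ i, 0 ≤ g i) :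
    g ⟨0, by omega⟩ + g ⟨1, by omega⟩ ≤ ∑ i, g i := by
  have h01 : (⟨0, by omega⟩ : Fin N1) ≠ ⟨1, by omega⟩ := by simp [Fin.ext_iff]
  rw [← Finset.sum_pair h01]
  exact Finset.sum_le_sum_of_subset_of_nonneg (Finset.subset_univ _) (fun i _ _ => hg i)

lemma aux_tail_zero (N1 : ℕ) (hN : 1 < N1) (g : Fin N1 → ℝ) (hg : ∀ i, 0 ≤ g i)
    (heq : ∑ i, g i = g ⟨0, by omega⟩ + g ⟨1, by omega⟩) :
    ∀ i : Fin N1, (i : ℕ) ≠ 0 → (i : ℕ) ≠ 1 → g i = 0 := by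
  have h01 : (⟨0, by omega⟩ : Fin N1) ≠ ⟨1, by omega⟩ := by simp [Fin.ext_iff]
  have hsub : ({⟨0, by omega⟩, ⟨1, by omega⟩} : Finset (Fin N1)) ⊆ Finset.univ := Finset.subset_univ _
  have hsd := Finset.sum_sdiff (f := g) hsub
  rw [Finset.sum_pair h01] at hsd
  have hz : ∑ i ∈ Finset.univ \ {(⟨0, by omega⟩ : Fin N1), ⟨1, by omega⟩}, g i = 0 := by
    linarith [hsd, heq]
  intro i hi0 hi1
  have hmem : i ∈ Finset.univ \ ({(⟨0, by omega⟩ : Fin N1), ⟨1, by omega⟩} : Finset (Fin N1)) := by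
    simp [Finset.mem_sdiff, Fin.ext_iff, hi0, hi1]
  exact (Finset.sum_eq_zero_iff_of_nonneg (fun j _ => hg j)).mp hz i hmem

lemma aux_char (N1 : ℕ) (hN : 1 < N1) (u1 u2 κ lam : ℝ)
    (hu1 : 0 < u1) (hu2 : 0 < u2) (hκ : 0 < κ) (hlam0 : 0 < lam)
    (hlam4 : lam ≤ 4 * κ * max u1 u2) (x : Fin N1 → ℝ) :
    (∀ y : Fin N1 → ℝ, lam * (∑ i, |x i|) + (u1 * x ⟨0, by omega⟩ + u2 * x ⟨1, by omega⟩ - 2 * κ) ^ 2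
        ≤ lam * (∑ i, |y i|) + (u1 * y ⟨0, by omega⟩ + u2 * y ⟨1, by omega⟩ - 2 * κ) ^ 2) ↔
    (u1 * x ⟨0, by omega⟩ = max u1 u2 * |x ⟨0, by omega⟩| ∧
     u2 * x ⟨1, by omega⟩ = max u1 u2 * |x ⟨1, by omega⟩| ∧
     u1 * x ⟨0, by omega⟩ + u2 * x ⟨1, by omega⟩ = 2 * κ - lam / (2 * max u1 u2) ∧
     ∀ i : Fin N1, (i : ℕ) ≠ 0 → (i : ℕ) ≠ 1 → x i = 0) := by
  have hcases : max u1 u2 = u1 ∨ max u1 u2 = u2 := max_choice u1 u2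
  have hu1u : u1 ≤ max u1 u2 := le_max_left _ _
  have hu2u : u2 ≤ max u1 u2 := le_max_right _ _
  generalize hu_def : max u1 u2 = u at hcases hu1u hu2u hlam4 ⊢
  have hu : 0 < u := lt_of_lt_of_le hu1 hu1u
  obtain ⟨d, hd_def⟩ : ∃ d : ℝ, 2 * κ - lam / (2 * u) = d := ⟨_, rfl⟩
  rw [hd_def]
  have hd : 0 ≤ d := by
    rw [← hd_def, sub_nonneg, div_le_iff₀ (by positivity)]
    nlinarith
  obtain ⟨m, hm_def⟩ : ∃ m : ℝ, lam * (d / u) + (lam / (2 * u)) ^ 2 = m := ⟨_, rfl⟩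
  -- the key identity
  have hid : ∀ y : Fin N1 → ℝ,
      lam * (∑ i, |y i|) + (u1 * y ⟨0, by omega⟩ + u2 * y ⟨1, by omega⟩ - 2 * κ) ^ 2
      = m + lam * ((∑ i, |y i|) - (|y ⟨0, by omega⟩| + |y ⟨1, by omega⟩|))
        + (lam / u) * (u * (|y ⟨0, by omega⟩| + |y ⟨1, by omega⟩|)
            - (u1 * y ⟨0, by omega⟩ + u2 * y ⟨1, by omega⟩))
        + ((u1 * y ⟨0, by omega⟩ + u2 * y ⟨1, by omega⟩) - d) ^ 2 := by
    intro y
    rw [← hm_def, ← hd_def]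
    field_simp
    ring
  -- conditions imply value m
  have hval : ∀ z : Fin N1 → ℝ,
      (u1 * z ⟨0, by omega⟩ = u * |z ⟨0, by omega⟩| ∧
       u2 * z ⟨1, by omega⟩ = u * |z ⟨1, by omega⟩| ∧
       u1 * z ⟨0, by omega⟩ + u2 * z ⟨1, by omega⟩ = d ∧
       ∀ i : Fin N1, (i : ℕ) ≠ 0 → (i : ℕ) ≠ 1 → z i = 0) →
      lam * (∑ i, |z i|) + (u1 * z ⟨0, by omega⟩ + u2 * z ⟨1, by omega⟩ - 2 * κ) ^ 2 = m := by
    intro z ⟨h1, h2, h3, h4⟩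
    have hT : ∑ i, |z i| = |z ⟨0, by omega⟩| + |z ⟨1, by omega⟩| :=
      aux_pair_sum N1 hN _ (fun i hi0 hi1 => by rw [h4 i hi0 hi1, abs_zero])
    rw [hid z, hT, h3]
    have habs : u * (|z ⟨0, by omega⟩| + |z ⟨1, by omega⟩|) = d := by
      rw [mul_add, ← h1, ← h2, h3]
    rw [habs]
    ring
  -- lower bound
  have hge : ∀ y : Fin N1 → ℝ,
      m ≤ lam * (∑ i, |y i|) + (u1 * y ⟨0, by omega⟩ + u2 * y ⟨1, by omega⟩ - 2 * κ) ^ 2 := by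
    intro y
    rw [hid y]
    have hT := aux_pair_le N1 hN (fun i => |y i|) (fun i => abs_nonneg _)
    have ha0 : u1 * y ⟨0, by omega⟩ ≤ u * |y ⟨0, by omega⟩| :=
      le_trans (mul_le_mul_of_nonneg_left (le_abs_self _) hu1.le)
        (mul_le_mul_of_nonneg_right hu1u (abs_nonneg _))
    have ha1 : u2 * y ⟨1, by omega⟩ ≤ u * |y ⟨1, by omega⟩| :=
      le_trans (mul_le_mul_of_nonneg_left (le_abs_self _) hu2.le)
        (mul_le_mul_of_nonneg_right hu2u (abs_nonneg _))
    have hsq : (0:ℝ) ≤ ((u1 * y ⟨0, by omega⟩ + u2 * y ⟨1, by omega⟩) - d) ^ 2 := sq_nonneg _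
    have hlu : 0 < lam / u := by positivity
    nlinarith [mul_le_mul_of_nonneg_left hT hlam0.le,
      mul_le_mul_of_nonneg_left (by linarith [ha0, ha1] :
        u1 * y ⟨0, by omega⟩ + u2 * y ⟨1, by omega⟩ ≤ u * (|y ⟨0, by omega⟩| + |y ⟨1, by omega⟩|)) hlu.le]
  -- witness
  have hwit : ∃ w : Fin N1 → ℝ,
      (u1 * w ⟨0, by omega⟩ = u * |w ⟨0, by omega⟩| ∧
       u2 * w ⟨1, by omega⟩ = u * |w ⟨1, by omega⟩| ∧
       u1 * w ⟨0, by omega⟩ + u2 * w ⟨1, by omega⟩ = d ∧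
       ∀ i : Fin N1, (i : ℕ) ≠ 0 → (i : ℕ) ≠ 1 → w i = 0) := by
    rcases hcases with hmax1 | hmax2
    · have huu : u = u1 := hu_def ▸ hmax1
      refine ⟨fun i => if (i : ℕ) = 0 then d / u1 else 0, ?_, ?_, ?_, ?_⟩
      · rw [huu]; norm_num [abs_of_nonneg (div_nonneg hd hu1.le)]
      · norm_num
      · simp only [Fin.val_mk, if_pos rfl]
        norm_num
        field_simp
      · intro i hi0 _; simp [hi0]
    · have huu : u = u2 := hu_def ▸ hmax2
      refine ⟨fun i => if (i : ℕ) = 1 then d / u2 else 0, ?_, ?_, ?_, ?_⟩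
      · norm_num
      · rw [huu]; norm_num [abs_of_nonneg (div_nonneg hd hu2.le)]
      · simp only [Fin.val_mk]
        norm_num
        field_simp
      · intro i _ hi1; simp [hi1]
  constructor
  · intro hmin
    obtain ⟨w, hw⟩ := hwit
    have hxm : lam * (∑ i, |x i|) + (u1 * x ⟨0, by omega⟩ + u2 * x ⟨1, by omega⟩ - 2 * κ) ^ 2 = m :=
      le_antisymm (by rw [← hval w hw]; exact hmin w) (hge x)
    have hT : |x ⟨0, by omega⟩| + |x ⟨1, by omega⟩| ≤ ∑ i, |x i| :=
      aux_pair_le N1 hN (fun i => |x i|) (fun i => abs_nonneg _)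
    have ha0 : u1 * x ⟨0, by omega⟩ ≤ u * |x ⟨0, by omega⟩| :=
      le_trans (mul_le_mul_of_nonneg_left (le_abs_self _) hu1.le)
        (mul_le_mul_of_nonneg_right hu1u (abs_nonneg _))
    have ha1 : u2 * x ⟨1, by omega⟩ ≤ u * |x ⟨1, by omega⟩| :=
      le_trans (mul_le_mul_of_nonneg_left (le_abs_self _) hu2.le)
        (mul_le_mul_of_nonneg_right hu2u (abs_nonneg _))
    have hid' := hid x
    rw [hxm] at hid'
    obtain ⟨A, hA_def⟩ : ∃ A : ℝ, (∑ i, |x i|) - (|x ⟨0, by omega⟩| + |x ⟨1, by omega⟩|) = A :=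
      ⟨_, rfl⟩
    obtain ⟨B, hB_def⟩ : ∃ B : ℝ, u * (|x ⟨0, by omega⟩| + |x ⟨1, by omega⟩|)
        - (u1 * x ⟨0, by omega⟩ + u2 * x ⟨1, by omega⟩) = B := ⟨_, rfl⟩
    obtain ⟨s, hs_def⟩ : ∃ s : ℝ, u1 * x ⟨0, by omega⟩ + u2 * x ⟨1, by omega⟩ = s := ⟨_, rfl⟩
    rw [hs_def] at hB_def
    rw [hs_def, hA_def, hB_def] at hid'
    have hA : 0 ≤ A := by rw [← hA_def]; linarith
    have hB : 0 ≤ B := by rw [← hB_def, ← hs_def]; linarith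
    have hC : 0 ≤ (s - d) ^ 2 := sq_nonneg _
    have hlA : 0 ≤ lam * A := mul_nonneg hlam0.le hA
    have hlB : 0 ≤ (lam / u) * B := mul_nonneg (by positivity) hB
    have hsum0 : lam * A + (lam / u) * B + (s - d) ^ 2 = 0 := by linarith
    have hA0 : A = 0 := by
      have h1 : lam * A = 0 := by linarith
      rcases mul_eq_zero.mp h1 with h | h
      · exact absurd h hlam0.ne'
      · exact h
    have hB0 : B = 0 := by
      have h2 : (lam / u) * B = 0 := by linarith
      rcases mul_eq_zero.mp h2 with h | h
      · exact absurd h (by positivity : (0:ℝ) < lam / u).ne'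
      · exact h
    have hC0 : (s - d) ^ 2 = 0 := by linarith
    have hsz : s = d := by
      have := pow_eq_zero_iff (n := 2) (by norm_num) |>.mp hC0
      linarith
    have hc1 : u1 * x ⟨0, by omega⟩ = u * |x ⟨0, by omega⟩| := by
      have hBe : u * (|x ⟨0, by omega⟩| + |x ⟨1, by omega⟩|)
          = u1 * x ⟨0, by omega⟩ + u2 * x ⟨1, by omega⟩ := by
        rw [hs_def]; linarith [hB_def.trans hB0]
      linarith [ha0, ha1, hBe]
    have hc2 : u2 * x ⟨1, by omega⟩ = u * |x ⟨1, by omega⟩| := by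
      have hBe : u * (|x ⟨0, by omega⟩| + |x ⟨1, by omega⟩|)
          = u1 * x ⟨0, by omega⟩ + u2 * x ⟨1, by omega⟩ := by
        rw [hs_def]; linarith [hB_def.trans hB0]
      linarith [ha0, ha1, hBe]
    refine ⟨hc1, hc2, hs_def.trans hsz, ?_⟩
    have hTe : ∑ i, |x i| = |x ⟨0, by omega⟩| + |x ⟨1, by omega⟩| := by
      linarith [hA_def.trans hA0]
    intro i hi0 hi1
    exact abs_eq_zero.mp (aux_tail_zero N1 hN (fun i => |x i|) (fun i => abs_nonneg _) hTe i hi0 hi1)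
  · intro hc
    intro y
    rw [hval x ⟨hc.1, hc.2.1, hc.2.2.1, hc.2.2.2⟩]
    exact hge y

theorem stmt_2 (N1 : ℕ) (hN : 2 ≤ N1) (u1 u2 κ lam : ℝ)
    (hu1 : 0 < u1) (hu2 : 0 < u2) (hκ : 0 ≤ κ) (hlam0 : 0 < lam) (hlam : lam ≤ 2 * κ)
    (hmax : lam / (4 * κ) ≤ max u1 u2) :
    let e1 : Fin N1 → ℝ := fun i => if (i : ℕ) = 0 then 1 else 0
    let e2 : Fin N1 → ℝ := fun i => if (i : ℕ) = 1 then 1 else 0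
    let obj : (Fin N1 → ℝ) → ℝ := fun x =>
      lam * (∑ i, |x i|) + (u1 * x ⟨0, by omega⟩ + u2 * x ⟨1, by omega⟩ - 2 * κ) ^ 2
    let argmin : Set (Fin N1 → ℝ) := {x | ∀ y, obj x ≤ obj y}
    (u2 < u1 → argmin = {((4 * u1 * κ - lam) / (2 * u1 ^ 2)) • e1}) ∧
    (u1 < u2 → argmin = {((4 * u2 * κ - lam) / (2 * u2 ^ 2)) • e2}) ∧
    (u1 = u2 → argmin =
      {x | ∃ t ∈ Set.Icc (0 : ℝ) 1,
        x = ((4 * u1 * κ - lam) / (2 * u1 ^ 2)) • (t • e1 + (1 - t) • e2)}) := by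
  intro e1 e2 obj argmin
  have he1 : e1 = fun i : Fin N1 => if (i : ℕ) = 0 then (1:ℝ) else 0 := rfl
  have he2 : e2 = fun i : Fin N1 => if (i : ℕ) = 1 then (1:ℝ) else 0 := rfl
  have hκ0 : 0 < κ := by linarith
  have hlam4 : lam ≤ 4 * κ * max u1 u2 := by
    have h := (div_le_iff₀ (by positivity : (0:ℝ) < 4 * κ)).mp hmax
    linarith [mul_comm (max u1 u2) (4 * κ)]
  have hchar : ∀ x : Fin N1 → ℝ, x ∈ argmin ↔
      (u1 * x ⟨0, by omega⟩ = max u1 u2 * |x ⟨0, by omega⟩| ∧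
       u2 * x ⟨1, by omega⟩ = max u1 u2 * |x ⟨1, by omega⟩| ∧
       u1 * x ⟨0, by omega⟩ + u2 * x ⟨1, by omega⟩ = 2 * κ - lam / (2 * max u1 u2) ∧
       ∀ i : Fin N1, (i : ℕ) ≠ 0 → (i : ℕ) ≠ 1 → x i = 0) :=
    fun x => aux_char N1 hN u1 u2 κ lam hu1 hu2 hκ0 hlam0 hlam4 x
  refine ⟨?_, ?_, ?_⟩
  · -- u2 < u1
    intro h12
    have hmx : max u1 u2 = u1 := max_eq_left h12.le
    have hc0 : 0 ≤ (4 * u1 * κ - lam) / (2 * u1 ^ 2) := by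
      apply div_nonneg _ (by positivity)
      rw [hmx] at hlam4; linarith
    ext x
    rw [Set.mem_singleton_iff, hchar x, hmx]
    constructor
    · rintro ⟨hc1, hc2, hc3, hc4⟩
      have hx1 : x ⟨1, by omega⟩ = 0 := by
        have h1 : |x ⟨1, by omega⟩| ≤ 0 := by
          nlinarith [le_abs_self (x ⟨1, by omega⟩), abs_nonneg (x ⟨1, by omega⟩)]
        have := abs_nonneg (x ⟨1, by omega⟩)
        exact abs_eq_zero.mp (le_antisymm h1 this)
      have hx0 : x ⟨0, by omega⟩ = (4 * u1 * κ - lam) / (2 * u1 ^ 2) := by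
        rw [hx1, mul_zero, add_zero] at hc3
        have hdl : lam / (2 * u1) * (2 * u1) = lam := div_mul_cancel₀ _ (by positivity)
        rw [eq_div_iff (by positivity : (2 * u1 ^ 2 : ℝ) ≠ 0)]
        linear_combination (2 * u1) * hc3 - hdl
      funext i
      simp only [Pi.smul_apply, he1, smul_eq_mul]
      by_cases hi0 : (i : ℕ) = 0
      · rw [if_pos hi0, mul_one, show i = (⟨0, by omega⟩ : Fin N1) from Fin.ext hi0, hx0]
      · rw [if_neg hi0, mul_zero]
        by_cases hi1 : (i : ℕ) = 1
        · rw [show i = (⟨1, by omega⟩ : Fin N1) from Fin.ext hi1, hx1]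
        · exact hc4 i hi0 hi1
    · intro hx
      rw [hx]
      have h0 : (((4 * u1 * κ - lam) / (2 * u1 ^ 2)) • e1) ⟨0, by omega⟩
          = (4 * u1 * κ - lam) / (2 * u1 ^ 2) := by simp [he1]
      have h1 : (((4 * u1 * κ - lam) / (2 * u1 ^ 2)) • e1) ⟨1, by omega⟩ = 0 := by
        simp [he1]
      refine ⟨?_, ?_, ?_, ?_⟩
      · rw [h0, abs_of_nonneg hc0]
      · rw [h1]; simp
      · rw [h0, h1, mul_zero, add_zero]
        field_simp
        ring
      · intro i hi0 _
        simp [he1, hi0]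
  · -- u1 < u2
    intro h12
    have hmx : max u1 u2 = u2 := max_eq_right h12.le
    have hc0 : 0 ≤ (4 * u2 * κ - lam) / (2 * u2 ^ 2) := by
      apply div_nonneg _ (by positivity)
      rw [hmx] at hlam4; linarith
    ext x
    rw [Set.mem_singleton_iff, hchar x, hmx]
    constructor
    · rintro ⟨hc1, hc2, hc3, hc4⟩
      have hx0 : x ⟨0, by omega⟩ = 0 := by
        have h1 : |x ⟨0, by omega⟩| ≤ 0 := by
          nlinarith [le_abs_self (x ⟨0, by omega⟩), abs_nonneg (x ⟨0, by omega⟩)]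
        have := abs_nonneg (x ⟨0, by omega⟩)
        exact abs_eq_zero.mp (le_antisymm h1 this)
      have hx1 : x ⟨1, by omega⟩ = (4 * u2 * κ - lam) / (2 * u2 ^ 2) := by
        rw [hx0, mul_zero, zero_add] at hc3
        have hdl : lam / (2 * u2) * (2 * u2) = lam := div_mul_cancel₀ _ (by positivity)
        rw [eq_div_iff (by positivity : (2 * u2 ^ 2 : ℝ) ≠ 0)]
        linear_combination (2 * u2) * hc3 - hdl
      funext i
      simp only [Pi.smul_apply, he2, smul_eq_mul]
      by_cases hi1 : (i : ℕ) = 1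
      · rw [if_pos hi1, mul_one, show i = (⟨1, by omega⟩ : Fin N1) from Fin.ext hi1, hx1]
      · rw [if_neg hi1, mul_zero]
        by_cases hi0 : (i : ℕ) = 0
        · rw [show i = (⟨0, by omega⟩ : Fin N1) from Fin.ext hi0, hx0]
        · exact hc4 i hi0 hi1
    · intro hx
      rw [hx]
      have h0 : (((4 * u2 * κ - lam) / (2 * u2 ^ 2)) • e2) ⟨0, by omega⟩ = 0 := by simp [he2]
      have h1 : (((4 * u2 * κ - lam) / (2 * u2 ^ 2)) • e2) ⟨1, by omega⟩
          = (4 * u2 * κ - lam) / (2 * u2 ^ 2) := by simp [he2]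
      refine ⟨?_, ?_, ?_, ?_⟩
      · rw [h0]; simp
      · rw [h1, abs_of_nonneg hc0]
      · rw [h0, h1, mul_zero, zero_add]
        field_simp
        ring
      · intro i _ hi1
        simp [he2, hi1]
  · -- u1 = u2
    intro h12
    have hmx : max u1 u2 = u1 := by rw [← h12, max_self]
    have hc0 : 0 ≤ (4 * u1 * κ - lam) / (2 * u1 ^ 2) := by
      apply div_nonneg _ (by positivity)
      rw [hmx] at hlam4; linarith
    have hval0 : ∀ (c t : ℝ), (c • (t • e1 + (1 - t) • e2)) ⟨0, by omega⟩ = c * t := by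
      intro c t; simp [he1, he2]
    have hval1 : ∀ (c t : ℝ), (c • (t • e1 + (1 - t) • e2)) ⟨1, by omega⟩ = c * (1 - t) := by
      intro c t; simp [he1, he2]
    ext x
    rw [hchar x, hmx]
    constructor
    · rintro ⟨hc1, hc2, hc3, hc4⟩
      have hx0n : 0 ≤ x ⟨0, by omega⟩ := by
        have := abs_nonneg (x ⟨0, by omega⟩)
        nlinarith
      have hx1n : 0 ≤ x ⟨1, by omega⟩ := by
        have := abs_nonneg (x ⟨1, by omega⟩)
        nlinarith [h12]
      have hsumc : x ⟨0, by omega⟩ + x ⟨1, by omega⟩ = (4 * u1 * κ - lam) / (2 * u1 ^ 2) := by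
        have hdl : lam / (2 * u1) * (2 * u1) = lam := div_mul_cancel₀ _ (by positivity)
        rw [eq_div_iff (by positivity : (2 * u1 ^ 2 : ℝ) ≠ 0)]
        linear_combination (2 * u1) * hc3 - hdl + (2 * u1 * x ⟨1, by omega⟩) * h12
      by_cases hc : (4 * u1 * κ - lam) / (2 * u1 ^ 2) = 0
      · refine ⟨0, ⟨le_refl 0, zero_le_one⟩, ?_⟩
        have hx0z : x ⟨0, by omega⟩ = 0 := by rw [hc] at hsumc; linarith
        have hx1z : x ⟨1, by omega⟩ = 0 := by rw [hc] at hsumc; linarith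
        funext i
        rw [hc]
        simp only [Pi.smul_apply, Pi.add_apply, Pi.smul_apply, he1, he2, smul_eq_mul, zero_mul]
        by_cases hi0 : (i : ℕ) = 0
        · rw [show i = (⟨0, by omega⟩ : Fin N1) from Fin.ext hi0, hx0z]
        · by_cases hi1 : (i : ℕ) = 1
          · rw [show i = (⟨1, by omega⟩ : Fin N1) from Fin.ext hi1, hx1z]
          · exact hc4 i hi0 hi1
      · have hcpos : 0 < (4 * u1 * κ - lam) / (2 * u1 ^ 2) := lt_of_le_of_ne hc0 (Ne.symm hc)
        refine ⟨x ⟨0, by omega⟩ / ((4 * u1 * κ - lam) / (2 * u1 ^ 2)),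
          ⟨div_nonneg hx0n hc0, ?_⟩, ?_⟩
        · rw [div_le_one hcpos]; linarith
        · funext i
          by_cases hi0 : (i : ℕ) = 0
          · rw [show i = (⟨0, by omega⟩ : Fin N1) from Fin.ext hi0, hval0]
            rw [mul_div_cancel₀ _ (ne_of_gt hcpos)]
          · by_cases hi1 : (i : ℕ) = 1
            · rw [show i = (⟨1, by omega⟩ : Fin N1) from Fin.ext hi1, hval1,
                mul_sub, mul_one, mul_div_cancel₀ _ (ne_of_gt hcpos)]
              linarith [hsumc]
            · rw [hc4 i hi0 hi1]
              simp only [Pi.smul_apply, Pi.add_apply, he1, he2, smul_eq_mul]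
              rw [if_neg hi0, if_neg hi1]
              ring
    · rintro ⟨t, ⟨ht0, ht1⟩, hx⟩
      rw [hx]
      have h0 := hval0 ((4 * u1 * κ - lam) / (2 * u1 ^ 2)) t
      have h1 := hval1 ((4 * u1 * κ - lam) / (2 * u1 ^ 2)) t
      refine ⟨?_, ?_, ?_, ?_⟩
      · rw [h0, abs_of_nonneg (mul_nonneg hc0 ht0)]
      · rw [h1, abs_of_nonneg (mul_nonneg hc0 (by linarith)), ← h12]
      · rw [h0, h1, ← h12]
        field_simp
        ring
      · intro i hi0 hi1
        simp only [Pi.smul_apply, Pi.add_apply, he1, he2, smul_eq_mul]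
        rw [if_neg hi0, if_neg hi1]
        ring
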